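/- Let A be a real n×m matrix with full column rank m, Y a real n×m matrix, g ∈ ℝⁿ, c ∈ ℝᵐ, y ∈ ℝᵐ, and ρ > 0. Suppose AᵀA y = Aᵀg (the normal equations with σ = 0) and g − A y − Y c = ρ A c (stationarity of the penalty φ_{0,ρ}). If ρ > ‖A†Y‖₂ where A† = (AᵀA)⁻¹Aᵀ, then c = 0 and g = A y. -/

import Mathlib

open Matrix

/-- The operator 2-norm of a real matrix: the norm of the induced linear map between
Euclidean spaces. -/
noncomputable def opNorm2 {n m : ℕ} (A : Matrix (Fin n) (Fin m) ℝ) : ℝ :=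
  ‖LinearMap.toContinuousLinearMap (Matrix.toEuclideanLin A)‖

/-- first part of Theorem 3.3. If `A` has full column rank,
`AᵀA y = Aᵀg` (normal equations with `σ = 0`), `g − Ay − Yc = ρ Ac` (stationarity of
`φ_{0,ρ}`), and `ρ > ‖A†Y‖₂` with `A† = (AᵀA)⁻¹Aᵀ`, then `c = 0` and `g = Ay`. -/
theorem quadratic_penalty_stationary_implies_feasible
    {n m : ℕ} (A Y : Matrix (Fin n) (Fin m) ℝ) (hA : A.rank = m)
    (g : Fin n → ℝ) (c y : Fin m → ℝ) (ρ : ℝ) (hρ : 0 < ρ)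
    (hnormal : (Aᵀ * A).mulVec y = Aᵀ.mulVec g)
    (hstat : g - A.mulVec y - Y.mulVec c = ρ • A.mulVec c)
    (hbig : opNorm2 ((Aᵀ * A)⁻¹ * Aᵀ * Y) < ρ) :
    c = 0 ∧ g = A.mulVec y := by
  -- `AᵀA` is invertible since `A` has full column rank.
  have hMrank : (Aᵀ * A).rank = Fintype.card (Fin m) := by
    rw [Matrix.rank_transpose_mul_self, hA, Fintype.card_fin]
  have hMunit : IsUnit (Aᵀ * A) := by
    rw [← Matrix.mulVec_surjective_iff_isUnit]
    have hrange : LinearMap.range (Aᵀ * A).mulVecLin = ⊤ := by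
      apply Submodule.eq_top_of_finrank_eq
      rw [← Matrix.rank, hMrank]
      simp [Module.finrank_pi]
    intro v
    obtain ⟨w, hw⟩ := LinearMap.range_eq_top.mp hrange v
    exact ⟨w, hw⟩
  have hMdet : IsUnit (Aᵀ * A).det := (Matrix.isUnit_iff_isUnit_det _).mp hMunit
  have hMinv : (Aᵀ * A)⁻¹ * (Aᵀ * A) = 1 := Matrix.nonsing_inv_mul _ hMdet
  set B : Matrix (Fin m) (Fin n) ℝ := (Aᵀ * A)⁻¹ * Aᵀ with hB
  -- Apply `B` to the stationarity equation.
  have hkey : ρ • c = -(B * Y).mulVec c := by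
    have h1 : B.mulVec (g - A.mulVec y - Y.mulVec c) = ρ • B.mulVec (A.mulVec c) := by
      rw [hstat, Matrix.mulVec_smul]
    have hBA : B * A = 1 := by rw [hB, Matrix.mul_assoc, hMinv]
    have hBg : B.mulVec g = y := by
      rw [hB, ← Matrix.mulVec_mulVec, ← hnormal, Matrix.mulVec_mulVec, hMinv, Matrix.one_mulVec]
    have hBAy : B.mulVec (A.mulVec y) = y := by
      rw [Matrix.mulVec_mulVec, hBA, Matrix.one_mulVec]
    have hBAc : B.mulVec (A.mulVec c) = c := by
      rw [Matrix.mulVec_mulVec, hBA, Matrix.one_mulVec]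
    have h2 : B.mulVec g - B.mulVec (A.mulVec y) - B.mulVec (Y.mulVec c)
        = ρ • B.mulVec (A.mulVec c) := by
      rw [← Matrix.mulVec_sub, ← Matrix.mulVec_sub]; exact h1
    rw [hBg, hBAy, hBAc, sub_self, zero_sub, Matrix.mulVec_mulVec] at h2
    rw [← h2]
  -- Pass to Euclidean space and use the operator norm bound.
  have hc : c = 0 := by
    by_contra hc0
    set v : EuclideanSpace ℝ (Fin m) := (WithLp.equiv 2 (Fin m → ℝ)).symm c with hv
    have hvne : v ≠ 0 := by
      simp only [hv, ne_eq, EmbeddingLike.map_eq_zero_iff]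
      intro h; apply hc0; apply (WithLp.equiv 2 (Fin m → ℝ)).symm.injective; rw [h]; rfl
    have hvpos : 0 < ‖v‖ := norm_pos_iff.mpr hvne
    set T := LinearMap.toContinuousLinearMap (Matrix.toEuclideanLin (B * Y)) with hT
    have hTv : T v = (WithLp.equiv 2 (Fin m → ℝ)).symm ((B * Y).mulVec c) := by
      simp [hT, Matrix.toEuclideanLin_apply, hv]
    have hρv : ρ • v = -T v := by
      rw [hTv, hv]
      have : (WithLp.equiv 2 (Fin m → ℝ)).symm (ρ • c)
          = ρ • (WithLp.equiv 2 (Fin m → ℝ)).symm c := rfl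
      rw [← this, hkey]
      rfl
    have hnorm : ρ * ‖v‖ ≤ ‖T‖ * ‖v‖ := by
      calc ρ * ‖v‖ = ‖ρ • v‖ := by
            rw [norm_smul, Real.norm_eq_abs, abs_of_pos hρ]
        _ = ‖T v‖ := by rw [hρv, norm_neg]
        _ ≤ ‖T‖ * ‖v‖ := T.le_opNorm v
    have : ρ ≤ ‖T‖ := le_of_mul_le_mul_right hnorm hvpos
    have hlt : ‖T‖ < ρ := by
      have : opNorm2 ((Aᵀ * A)⁻¹ * Aᵀ * Y) = ‖T‖ := by rw [hT, opNorm2, hB]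
      rwa [this] at hbig
    linarith
  refine ⟨hc, ?_⟩
  have := hstat
  rw [hc] at this
  simpa [sub_eq_zero] using this
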